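/- Let j ≥ 1, 0 ≤ L ≤ j, and 0 ≤ μ < 2^j, and set ω_M = e^{-2πi/M}. Then the 2^L × 2^L matrix ( ω_{2^{j+1}}^{ (2^{j+1-L} p + 1) ((μ + r) mod 2^j) } )_{p,r=0}^{2^L - 1} factorizes as diag( ω_{2^L}^{μ p} )_{p=0}^{2^L-1} · F_{2^L} · diag( ω_{2^{j+1}}^{ (μ + r) mod 2^j } )_{r=0}^{2^L-1}, where F_{2^L} = ( ω_{2^L}^{p r} )_{p,r=0}^{2^L - 1} is the Fourier matrix of size 2^L. -/

import Mathlib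

open Complex Finset

/-- `ω_M = e^{-2πi/M}`. -/
noncomputable def dftOmega (M : ℕ) : ℂ := Complex.exp (-2 * Real.pi * Complex.I / M)

/-- Discrete Fourier transform of length `M`: `(F_M v)_k = Σ_{r<M} ω_M^{k r} v_r`. -/
noncomputable def dft (M : ℕ) (v : ℕ → ℂ) (k : ℕ) : ℂ :=
  ∑ r ∈ Finset.range M, dftOmega M ^ (k * r) * v r

/-- The `2^j`-periodization of a vector `x ∈ ℝ^{2^J}`:
`x^(j)_k = Σ_{ℓ < 2^{J-j}} x_{k + 2^j ℓ}`. -/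
noncomputable def periodization (J j : ℕ) (x : ℕ → ℝ) (k : ℕ) : ℝ :=
  ∑ ℓ ∈ Finset.range (2 ^ (J - j)), x (k + 2 ^ j * ℓ)
/-- The Fourier matrix `F_M = (ω_M^{pq})_{p,q=0}^{M-1}`. -/
noncomputable def fourierMatrix (M : ℕ) : Matrix (Fin M) (Fin M) ℂ :=
  fun p q => dftOmega M ^ ((p : ℕ) * (q : ℕ))

lemma dftOmega_pow_self (M : ℕ) (hM : M ≠ 0) : dftOmega M ^ M = 1 := by
  have hMc : (M : ℂ) ≠ 0 := Nat.cast_ne_zero.mpr hM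
  rw [dftOmega, ← Complex.exp_nat_mul]
  rw [show (M : ℂ) * (-2 * Real.pi * Complex.I / M) = (-1 : ℤ) * (2 * Real.pi * Complex.I) by
    field_simp; ring]
  exact Complex.exp_int_mul_two_pi_mul_I (-1)

lemma dftOmega_pow_eq_of_mod (M a b : ℕ) (hM : M ≠ 0) (h : a % M = b % M) :
    dftOmega M ^ a = dftOmega M ^ b := by
  conv_lhs => rw [← Nat.div_add_mod a M]
  conv_rhs => rw [← Nat.div_add_mod b M]
  rw [h, pow_add, pow_add, pow_mul, pow_mul, dftOmega_pow_self M hM, one_pow, one_pow]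

lemma dftOmega_pow_shrink (j L : ℕ) (hL : L ≤ j + 1) :
    dftOmega (2 ^ (j + 1)) ^ (2 ^ (j + 1 - L)) = dftOmega (2 ^ L) := by
  rw [dftOmega, dftOmega, ← Complex.exp_nat_mul]
  congr 1
  have h2 : ((2 : ℂ) ^ (j + 1 - L)) * 2 ^ L = 2 ^ (j + 1) := by
    rw [← pow_add]; congr 1; omega
  have hL0 : ((2 : ℂ) ^ L) ≠ 0 := pow_ne_zero _ two_ne_zero
  have hJ0 : ((2 : ℂ) ^ (j + 1)) ≠ 0 := pow_ne_zero _ two_ne_zero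
  have h2' : ((2 : ℂ) ^ (j + 1 - L)) * 2 ^ L = 2 ^ j * 2 := by rw [h2, pow_succ]
  push_cast
  field_simp
  linear_combination (-1 : ℂ) * h2'

/-- the matrix `(ω_{2^{j+1}}^{(2^{j+1-L}p+1)((μ+r) mod 2^j)})_{p,r}` factorizes as
`diag(ω_{2^L}^{μp}) · F_{2^L} · diag(ω_{2^{j+1}}^{(μ+r) mod 2^j})`. -/
theorem sampled_fourier_factorization (j : ℕ) (hj : 1 ≤ j) (L : ℕ) (hL : L ≤ j)
    (μ : ℕ) (hμ : μ < 2 ^ j) :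
    (fun p r : Fin (2 ^ L) =>
        dftOmega (2 ^ (j + 1)) ^ ((2 ^ (j + 1 - L) * (p : ℕ) + 1) * ((μ + (r : ℕ)) % 2 ^ j)))
      = Matrix.diagonal (fun p : Fin (2 ^ L) => dftOmega (2 ^ L) ^ (μ * (p : ℕ))) *
          fourierMatrix (2 ^ L) *
          Matrix.diagonal (fun r : Fin (2 ^ L) =>
            dftOmega (2 ^ (j + 1)) ^ ((μ + (r : ℕ)) % 2 ^ j)) := by
  have hL0 : (2 : ℕ) ^ L ≠ 0 := by positivity
  funext p r
  simp only [Matrix.mul_diagonal, Matrix.diagonal_mul, fourierMatrix]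
  set m := (μ + (r : ℕ)) % 2 ^ j with hm
  have key : dftOmega (2 ^ L) ^ ((p : ℕ) * m) =
      dftOmega (2 ^ L) ^ (μ * (p : ℕ)) * dftOmega (2 ^ L) ^ ((p : ℕ) * (r : ℕ)) := by
    rw [← pow_add]
    apply dftOmega_pow_eq_of_mod _ _ _ hL0
    have hdvd : (2 : ℕ) ^ L ∣ 2 ^ j := pow_dvd_pow 2 hL
    have h1 : m ≡ μ + (r : ℕ) [MOD 2 ^ j] := (Nat.mod_modEq _ _)
    have h2 : m ≡ μ + (r : ℕ) [MOD 2 ^ L] := h1.of_dvd hdvd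
    have h3 : (p : ℕ) * m ≡ (p : ℕ) * (μ + (r : ℕ)) [MOD 2 ^ L] := h2.mul_left _
    calc (p : ℕ) * m % 2 ^ L = (p : ℕ) * (μ + (r : ℕ)) % 2 ^ L := h3
    _ = (μ * (p : ℕ) + (p : ℕ) * (r : ℕ)) % 2 ^ L := by ring_nf
  calc dftOmega (2 ^ (j + 1)) ^ ((2 ^ (j + 1 - L) * (p : ℕ) + 1) * m)
      = (dftOmega (2 ^ (j + 1)) ^ (2 ^ (j + 1 - L))) ^ ((p : ℕ) * m) *
          dftOmega (2 ^ (j + 1)) ^ m := by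
        rw [← pow_mul, ← pow_add]; ring_nf
    _ = dftOmega (2 ^ L) ^ ((p : ℕ) * m) * dftOmega (2 ^ (j + 1)) ^ m := by
        rw [dftOmega_pow_shrink j L (by omega)]
    _ = dftOmega (2 ^ L) ^ (μ * (p : ℕ)) * dftOmega (2 ^ L) ^ ((p : ℕ) * (r : ℕ)) *
          dftOmega (2 ^ (j + 1)) ^ m := by rw [key]
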